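/- Chen's lemma for the Poisson Stein equation. Let λ > 0, let C ⊆ ℕ, and let P_λ denote the Poisson distribution with parameter λ, P_λ({k}) = e^{−λ} λ^k / k!. Then the equation λ·f(k+1) − k·f(k) = 1_C(k) − P_λ(C), for all k ∈ ℕ, admits a unique solution f : ℕ → ℝ with f(0) = 0, denoted f_C, and this solution satisfies sup_{k∈ℕ} |f_C(k+1) − f_C(k)| ≤ (1 − e^{−λ})/λ. -/

import Mathlib

open Real Classical

noncomputable def poissonProb (lam : ℝ) (C : Set ℕ) : ℝ :=
  ∑' k : ℕ, if k ∈ C then Real.exp (-lam) * lam ^ k / (Nat.factorial k : ℝ) else 0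

namespace ChenAux

/-- Poisson pmf. -/
noncomputable def pp (lam : ℝ) (i : ℕ) : ℝ :=
  Real.exp (-lam) * lam ^ i / (Nat.factorial i : ℝ)

noncomputable def aC (lam : ℝ) (C : Set ℕ) (i : ℕ) : ℝ :=
  if i ∈ C then pp lam i else 0

lemma poissonProb_eq (lam : ℝ) (C : Set ℕ) : poissonProb lam C = ∑' i, aC lam C i := rfl

lemma pp_pos {lam : ℝ} (hlam : 0 < lam) (i : ℕ) : 0 < pp lam i := by
  have h : (0:ℝ) < Nat.factorial i := by exact_mod_cast Nat.factorial_pos i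
  unfold pp
  positivity

lemma pp_nonneg {lam : ℝ} (hlam : 0 < lam) (i : ℕ) : 0 ≤ pp lam i := (pp_pos hlam i).le

lemma aC_nonneg {lam : ℝ} (hlam : 0 < lam) (C : Set ℕ) (i : ℕ) : 0 ≤ aC lam C i := by
  unfold aC; split
  · exact pp_nonneg hlam i
  · exact le_rfl

lemma aC_le_pp {lam : ℝ} (hlam : 0 < lam) (C : Set ℕ) (i : ℕ) : aC lam C i ≤ pp lam i := by
  unfold aC; split
  · exact le_rfl
  · exact pp_nonneg hlam i

lemma aC_eq (lam : ℝ) (C : Set ℕ) (i : ℕ) :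
    aC lam C i = pp lam i * (if i ∈ C then (1:ℝ) else 0) := by
  unfold aC; split <;> simp

lemma lam_mul_pp (lam : ℝ) (i : ℕ) :
    lam * pp lam i = ((i:ℝ) + 1) * pp lam (i+1) := by
  unfold pp
  have h1 : (Nat.factorial i : ℝ) ≠ 0 := by exact_mod_cast (Nat.factorial_pos i).ne'
  have h2 : (Nat.factorial (i+1) : ℝ) ≠ 0 := by exact_mod_cast (Nat.factorial_pos (i+1)).ne'
  have h3 : (Nat.factorial (i+1) : ℝ) = ((i:ℝ)+1) * Nat.factorial i := by
    rw [Nat.factorial_succ]; push_cast; ring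
  rw [h3]; field_simp
  ring

lemma summable_pp (lam : ℝ) : Summable (pp lam) := by
  have := (Real.summable_pow_div_factorial lam).mul_left (Real.exp (-lam))
  apply this.congr
  intro i
  rw [pp, mul_div_assoc]

lemma summable_aC {lam : ℝ} (hlam : 0 < lam) (C : Set ℕ) : Summable (aC lam C) :=
  Summable.of_nonneg_of_le (aC_nonneg hlam C) (aC_le_pp hlam C) (summable_pp lam)

lemma tsum_pp (lam : ℝ) : ∑' i, pp lam i = 1 := by
  have h : ∑' i : ℕ, lam ^ i / (Nat.factorial i : ℝ) = Real.exp lam := by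
    rw [Real.exp_eq_exp_ℝ, NormedSpace.exp_eq_tsum_div]
  calc ∑' i, pp lam i = ∑' i, Real.exp (-lam) * (lam ^ i / (Nat.factorial i : ℝ)) := by
        apply tsum_congr; intro i; rw [pp, mul_div_assoc]
    _ = Real.exp (-lam) * ∑' i, lam ^ i / (Nat.factorial i : ℝ) := tsum_mul_left
    _ = Real.exp (-lam) * Real.exp lam := by rw [h]
    _ = 1 := by rw [← Real.exp_add]; simp


noncomputable def F (lam : ℝ) (n : ℕ) : ℝ := ∑ i ∈ Finset.range n, pp lam i

noncomputable def T (lam : ℝ) (n : ℕ) : ℝ := ∑' i, pp lam (i + n)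

noncomputable def A (lam : ℝ) (C : Set ℕ) (n : ℕ) : ℝ := ∑ i ∈ Finset.range n, aC lam C i

noncomputable def B (lam : ℝ) (C : Set ℕ) (n : ℕ) : ℝ := ∑' i, aC lam C (i + n)

lemma summable_pp_add (lam : ℝ) (n : ℕ) : Summable (fun i => pp lam (i + n)) :=
  (summable_nat_add_iff n).mpr (summable_pp lam)

lemma summable_aC_add {lam : ℝ} (hlam : 0 < lam) (C : Set ℕ) (n : ℕ) :
    Summable (fun i => aC lam C (i + n)) :=
  (summable_nat_add_iff n).mpr (summable_aC hlam C)

lemma F_add_T (lam : ℝ) (n : ℕ) : F lam n + T lam n = 1 := by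
  rw [F, T, Summable.sum_add_tsum_nat_add n (summable_pp lam), tsum_pp]

lemma P_eq {lam : ℝ} (hlam : 0 < lam) (C : Set ℕ) (n : ℕ) :
    poissonProb lam C = A lam C n + B lam C n := by
  rw [poissonProb_eq, A, B, Summable.sum_add_tsum_nat_add n (summable_aC hlam C)]

lemma T_succ (lam : ℝ) (n : ℕ) : T lam n = pp lam n + T lam (n+1) := by
  rw [T, Summable.tsum_eq_zero_add (summable_pp_add lam n)]
  simp only [zero_add]
  congr 1
  rw [T]
  apply tsum_congr
  intro i
  congr 1
  omega

lemma F_succ (lam : ℝ) (n : ℕ) : F lam (n+1) = F lam n + pp lam n := by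
  rw [F, F, Finset.sum_range_succ]

lemma A_succ (lam : ℝ) (C : Set ℕ) (n : ℕ) : A lam C (n+1) = A lam C n + aC lam C n := by
  rw [A, A, Finset.sum_range_succ]

lemma F_nonneg {lam : ℝ} (hlam : 0 < lam) (n : ℕ) : 0 ≤ F lam n :=
  Finset.sum_nonneg fun i _ => pp_nonneg hlam i

lemma T_nonneg {lam : ℝ} (hlam : 0 < lam) (n : ℕ) : 0 ≤ T lam n :=
  tsum_nonneg fun i => pp_nonneg hlam _

lemma A_nonneg {lam : ℝ} (hlam : 0 < lam) (C : Set ℕ) (n : ℕ) : 0 ≤ A lam C n :=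
  Finset.sum_nonneg fun i _ => aC_nonneg hlam C i

lemma B_nonneg {lam : ℝ} (hlam : 0 < lam) (C : Set ℕ) (n : ℕ) : 0 ≤ B lam C n :=
  tsum_nonneg fun i => aC_nonneg hlam C _

lemma A_le_F {lam : ℝ} (hlam : 0 < lam) (C : Set ℕ) (n : ℕ) : A lam C n ≤ F lam n :=
  Finset.sum_le_sum fun i _ => aC_le_pp hlam C i

lemma B_le_T {lam : ℝ} (hlam : 0 < lam) (C : Set ℕ) (n : ℕ) : B lam C n ≤ T lam n :=
  Summable.tsum_le_tsum (fun i => aC_le_pp hlam C _) (summable_aC_add hlam C n) (summable_pp_add lam n)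

/-- `λ F(n) ≤ n ∑_{i<n} p(i+1)`. -/
lemma L1 {lam : ℝ} (hlam : 0 < lam) (n : ℕ) :
    lam * F lam n ≤ (n:ℝ) * ∑ i ∈ Finset.range n, pp lam (i+1) := by
  rw [F, Finset.mul_sum, Finset.mul_sum]
  apply Finset.sum_le_sum
  intro i hi
  have h1 := lam_mul_pp lam i
  have h2 : (i:ℝ) + 1 ≤ (n:ℝ) := by exact_mod_cast Finset.mem_range.mp hi
  nlinarith [pp_nonneg hlam (i+1)]

lemma L2 {lam : ℝ} (hlam : 0 < lam) (n : ℕ) :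
    lam * F lam n ≤ (n:ℝ) * F lam (n+1) := by
  have h1 := L1 hlam n
  have h2 : ∑ i ∈ Finset.range n, pp lam (i+1) ≤ F lam (n+1) := by
    rw [F, Finset.sum_range_succ']
    have := pp_nonneg hlam 0
    linarith
  have h3 : (0:ℝ) ≤ (n:ℝ) := Nat.cast_nonneg n
  nlinarith

lemma L3 {lam : ℝ} (hlam : 0 < lam) (n : ℕ) :
    (n:ℝ) * T lam (n+1) ≤ lam * T lam n := by
  rw [T, T, ← tsum_mul_left, ← tsum_mul_left]
  apply Summable.tsum_le_tsum _ ((summable_pp_add lam (n+1)).mul_left _)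
    ((summable_pp_add lam n).mul_left _)
  intro i
  have h1 := lam_mul_pp lam (i + n)
  have hidx : i + (n+1) = (i + n) + 1 := by omega
  rw [hidx]
  have h2 : (n:ℝ) ≤ ((i+n:ℕ):ℝ) + 1 := by push_cast; linarith [Nat.cast_nonneg (α := ℝ) i]
  nlinarith [pp_nonneg hlam ((i+n)+1)]


noncomputable def cc (lam : ℝ) (k : ℕ) : ℝ :=
  Real.exp lam * (Nat.factorial k : ℝ) / lam ^ (k+1)

lemma cc_pos {lam : ℝ} (hlam : 0 < lam) (k : ℕ) : 0 < cc lam k := by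
  have h : (0:ℝ) < Nat.factorial k := by exact_mod_cast Nat.factorial_pos k
  unfold cc
  positivity

lemma cc_mul_pp {lam : ℝ} (hlam : 0 < lam) (k : ℕ) : cc lam k * pp lam k = 1 / lam := by
  unfold cc pp
  have h1 : (Nat.factorial k : ℝ) ≠ 0 := by exact_mod_cast (Nat.factorial_pos k).ne'
  have h2 : Real.exp (-lam) = (Real.exp lam)⁻¹ := Real.exp_neg lam
  rw [h2]
  have h3 : Real.exp lam ≠ 0 := (Real.exp_pos lam).ne'
  field_simp
  ring

lemma cc_mul_pp_succ {lam : ℝ} (hlam : 0 < lam) (k : ℕ) :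
    cc lam k * pp lam (k+1) = 1 / ((k:ℝ) + 1) := by
  unfold cc pp
  have h1 : (Nat.factorial k : ℝ) ≠ 0 := by exact_mod_cast (Nat.factorial_pos k).ne'
  have h3 : Real.exp lam ≠ 0 := (Real.exp_pos lam).ne'
  have h4 : (Nat.factorial (k+1) : ℝ) = ((k:ℝ)+1) * Nat.factorial k := by
    rw [Nat.factorial_succ]; push_cast; ring
  have h5 : ((k:ℝ)+1) ≠ 0 := by positivity
  rw [Real.exp_neg, h4]
  field_simp

lemma lam_mul_cc {lam : ℝ} (hlam : 0 < lam) (k : ℕ) :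
    lam * cc lam (k+1) = ((k:ℝ)+1) * cc lam k := by
  unfold cc
  have h4 : (Nat.factorial (k+1) : ℝ) = ((k:ℝ)+1) * Nat.factorial k := by
    rw [Nat.factorial_succ]; push_cast; ring
  rw [h4]
  have hl : lam ≠ 0 := hlam.ne'
  field_simp
  ring

noncomputable def steinSol (lam : ℝ) (C : Set ℕ) : ℕ → ℝ
  | 0 => 0
  | k+1 => ((k : ℝ) * steinSol lam C k + ((if k ∈ C then (1:ℝ) else 0) - poissonProb lam C)) / lam

lemma steinSol_zero (lam : ℝ) (C : Set ℕ) : steinSol lam C 0 = 0 := rfl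

lemma steinSol_spec {lam : ℝ} (hlam : 0 < lam) (C : Set ℕ) (k : ℕ) :
    lam * steinSol lam C (k+1) - (k:ℝ) * steinSol lam C k =
      (if k ∈ C then (1:ℝ) else 0) - poissonProb lam C := by
  rw [steinSol]
  field_simp
  ring

lemma eq_steinSol {lam : ℝ} (hlam : 0 < lam) (C : Set ℕ) (f : ℕ → ℝ) (h0 : f 0 = 0)
    (he : ∀ k : ℕ, lam * f (k+1) - (k:ℝ) * f k =
      (if k ∈ C then (1:ℝ) else 0) - poissonProb lam C) :
    f = steinSol lam C := by
  funext k
  induction k with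
  | zero => simpa [steinSol_zero] using h0
  | succ k ih =>
    have h := he k
    rw [steinSol, ← ih]
    have hl : lam ≠ 0 := hlam.ne'
    field_simp
    linarith

lemma steinSol_closed {lam : ℝ} (hlam : 0 < lam) (C : Set ℕ) (k : ℕ) :
    steinSol lam C (k+1) =
      cc lam k * (A lam C (k+1) - poissonProb lam C * F lam (k+1)) := by
  have hl : lam ≠ 0 := hlam.ne'
  induction k with
  | zero =>
    rw [steinSol, steinSol_zero]
    have h1 : lam * (cc lam 0 * pp lam 0) = 1 := by
      rw [cc_mul_pp hlam 0]; field_simp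
    have hA : A lam C 1 = pp lam 0 * (if 0 ∈ C then (1:ℝ) else 0) := by
      rw [A, Finset.sum_range_one, aC_eq]
    have hF : F lam 1 = pp lam 0 := by rw [F, Finset.sum_range_one]
    rw [hA, hF, div_eq_iff hl]
    push_cast
    linear_combination (-((if 0 ∈ C then (1:ℝ) else 0) - poissonProb lam C)) * h1
  | succ k ih =>
    rw [steinSol, ih, A_succ lam C (k+1), F_succ lam (k+1), aC_eq lam C (k+1)]
    have h1 := lam_mul_cc hlam k
    have h2 : lam * (cc lam (k+1) * pp lam (k+1)) = 1 := by
      rw [cc_mul_pp hlam (k+1)]; field_simp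
    rw [div_eq_iff hl]
    push_cast
    linear_combination
      (-(A lam C (k+1) - poissonProb lam C * F lam (k+1))) * h1 +
      (-((if (k+1) ∈ C then (1:ℝ) else 0) - poissonProb lam C)) * h2


/-- Abstract core inequality. -/
lemma abs_key (cm ck pm Fm Tm1 Am am Bv P bnd : ℝ)
    (hAm0 : 0 ≤ Am) (hAmF : Am ≤ Fm) (ham0 : 0 ≤ am) (hampm : am ≤ pm)
    (hB0 : 0 ≤ Bv) (hBT : Bv ≤ Tm1) (hFm : 0 ≤ Fm) (hTm1 : 0 ≤ Tm1)
    (hcm : 0 ≤ cm) (hck : 0 ≤ ck)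
    (hu : cm * Tm1 ≤ ck * (pm + Tm1)) (hw : ck * Fm ≤ cm * (Fm + pm))
    (hFT : Fm + pm + Tm1 = 1) (hP : P = Am + am + Bv)
    (hv : (cm * Tm1 + ck * Fm) * pm ≤ bnd) :
    |cm * ((Am + am) - P * (Fm + pm)) - ck * (Am - P * Fm)| ≤ bnd := by
  have hu0 : cm * Tm1 - ck * (pm + Tm1) ≤ 0 := by linarith
  have hw0 : ck * Fm - cm * (Fm + pm) ≤ 0 := by linarith
  have hv0 : 0 ≤ cm * Tm1 + ck * Fm :=
    add_nonneg (mul_nonneg hcm hTm1) (mul_nonneg hck hFm)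
  have hD : cm * ((Am + am) - P * (Fm + pm)) - ck * (Am - P * Fm)
      = Am * (cm * Tm1 - ck * (pm + Tm1)) + am * (cm * Tm1 + ck * Fm)
        + Bv * (ck * Fm - cm * (Fm + pm)) := by
    rw [hP]
    linear_combination (Am * ck - Am * cm - am * cm) * hFT
  have hid : Fm * (cm * Tm1 - ck * (pm + Tm1)) + pm * (cm * Tm1 + ck * Fm)
      + Tm1 * (ck * Fm - cm * (Fm + pm)) = 0 := by ring
  have h4 : pm * (cm * Tm1 + ck * Fm) ≤ bnd := by
    have := mul_comm pm (cm * Tm1 + ck * Fm)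
    linarith
  rw [hD, abs_le]
  constructor
  · have h1 : Fm * (cm * Tm1 - ck * (pm + Tm1)) ≤ Am * (cm * Tm1 - ck * (pm + Tm1)) :=
      mul_le_mul_of_nonpos_right hAmF hu0
    have h2 : 0 ≤ am * (cm * Tm1 + ck * Fm) := mul_nonneg ham0 hv0
    have h3 : Tm1 * (ck * Fm - cm * (Fm + pm)) ≤ Bv * (ck * Fm - cm * (Fm + pm)) :=
      mul_le_mul_of_nonpos_right hBT hw0
    linarith
  · have h1 : Am * (cm * Tm1 - ck * (pm + Tm1)) ≤ 0 :=
      mul_nonpos_of_nonneg_of_nonpos hAm0 hu0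
    have h3 : Bv * (ck * Fm - cm * (Fm + pm)) ≤ 0 :=
      mul_nonpos_of_nonneg_of_nonpos hB0 hw0
    have h2 : am * (cm * Tm1 + ck * Fm) ≤ pm * (cm * Tm1 + ck * Fm) :=
      mul_le_mul_of_nonneg_right hampm hv0
    linarith


lemma pp_zero (lam : ℝ) : pp lam 0 = Real.exp (-lam) := by simp [pp]

lemma hu_con {lam : ℝ} (hlam : 0 < lam) (k : ℕ) :
    cc lam (k+1) * T lam (k+2) ≤ cc lam k * (pp lam (k+1) + T lam (k+2)) := by
  rw [← T_succ lam (k+1)]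
  have h3 := L3 hlam (k+1)
  have hc := lam_mul_cc hlam k
  have h5 := mul_le_mul_of_nonneg_left h3 (cc_pos hlam k).le
  push_cast at h3 h5
  have h6 : lam * (cc lam (k+1) * T lam (k+2)) ≤ lam * (cc lam k * T lam (k+1)) := by
    nlinarith [T_nonneg hlam (k+2)]
  exact le_of_mul_le_mul_left h6 hlam

lemma hw_con {lam : ℝ} (hlam : 0 < lam) (k : ℕ) :
    cc lam k * F lam (k+1) ≤ cc lam (k+1) * (F lam (k+1) + pp lam (k+1)) := by
  rw [← F_succ lam (k+1)]
  have h3 := L2 hlam (k+1)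
  have hc := lam_mul_cc hlam k
  have h5 := mul_le_mul_of_nonneg_left h3 (cc_pos hlam k).le
  push_cast at h3 h5
  have h6 : lam * (cc lam k * F lam (k+1)) ≤ lam * (cc lam (k+1) * F lam (k+2)) := by
    nlinarith [F_nonneg hlam (k+2)]
  exact le_of_mul_le_mul_left h6 hlam

lemma hv_con {lam : ℝ} (hlam : 0 < lam) (k : ℕ) :
    (cc lam (k+1) * T lam (k+2) + cc lam k * F lam (k+1)) * pp lam (k+1)
      ≤ (1 - Real.exp (-lam)) / lam := by
  have e : (cc lam (k+1) * T lam (k+2) + cc lam k * F lam (k+1)) * pp lam (k+1)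
      = T lam (k+2) * (1/lam) + F lam (k+1) * (1/((k:ℝ)+1)) := by
    rw [← cc_mul_pp hlam (k+1), ← cc_mul_pp_succ hlam k]; ring
  have key : ((k:ℝ)+1) * T lam (k+2) + lam * F lam (k+1)
      ≤ (1 - pp lam 0) * ((k:ℝ)+1) := by
    have l1 := L1 hlam (k+1)
    have e2 : F lam (k+2) = (∑ i ∈ Finset.range (k+1), pp lam (i+1)) + pp lam 0 := by
      rw [F, Finset.sum_range_succ']
    have e3 := F_add_T lam (k+2)
    have hT : T lam (k+2) = 1 - pp lam 0 - ∑ i ∈ Finset.range (k+1), pp lam (i+1) := by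
      linarith
    push_cast at l1
    rw [hT]
    nlinarith [l1]
  rw [e, ← pp_zero lam, mul_one_div, mul_one_div]
  have hk1 : (0:ℝ) < (k:ℝ)+1 := by positivity
  rw [div_add_div _ _ hlam.ne' hk1.ne', div_le_div_iff₀ (by positivity) hlam]
  nlinarith [mul_le_mul_of_nonneg_right key hlam.le]

lemma abs_delta {lam : ℝ} (hlam : 0 < lam) (C : Set ℕ) (k : ℕ) :
    |steinSol lam C (k+1) - steinSol lam C k| ≤ (1 - Real.exp (-lam)) / lam := by
  cases k with
  | zero =>
    rw [steinSol_zero, sub_zero]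
    have h1 : steinSol lam C 1
        = ((if 0 ∈ C then (1:ℝ) else 0) - poissonProb lam C) / lam := by
      rw [steinSol, steinSol_zero]; push_cast; ring
    rw [h1, abs_div, abs_of_pos hlam]
    have hnum : |(if 0 ∈ C then (1:ℝ) else 0) - poissonProb lam C|
        ≤ 1 - Real.exp (-lam) := by
      have hP := P_eq hlam C 1
      have hA1 : A lam C 1 = aC lam C 0 := by rw [A, Finset.sum_range_one]
      have hF1 : F lam 1 = pp lam 0 := by rw [F, Finset.sum_range_one]
      have hFT := F_add_T lam 1
      have hB0 := B_nonneg hlam C 1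
      have hBT := B_le_T hlam C 1
      have hT0 := T_nonneg hlam 1
      have hpp0 := pp_pos hlam 0
      rw [hA1] at hP
      rw [hF1] at hFT
      rw [← pp_zero lam, abs_le]
      unfold aC at hP
      by_cases h0 : 0 ∈ C
      · simp only [h0, if_true] at hP ⊢
        constructor <;> linarith
      · simp only [h0, if_false] at hP ⊢
        constructor <;> linarith
    gcongr
  | succ k =>
    rw [steinSol_closed hlam C (k+1), steinSol_closed hlam C k,
        A_succ lam C (k+1), F_succ lam (k+1)]
    apply abs_key (cc lam (k+1)) (cc lam k) (pp lam (k+1)) (F lam (k+1)) (T lam (k+2))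
      (A lam C (k+1)) (aC lam C (k+1)) (B lam C (k+2)) (poissonProb lam C)
    · exact A_nonneg hlam C (k+1)
    · exact A_le_F hlam C (k+1)
    · exact aC_nonneg hlam C (k+1)
    · exact aC_le_pp hlam C (k+1)
    · exact B_nonneg hlam C (k+2)
    · exact B_le_T hlam C (k+2)
    · exact F_nonneg hlam (k+1)
    · exact T_nonneg hlam (k+2)
    · exact (cc_pos hlam (k+1)).le
    · exact (cc_pos hlam k).le
    · exact hu_con hlam k
    · exact hw_con hlam k
    · have e3 := F_add_T lam (k+2)
      have e4 := F_succ lam (k+1)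
      linarith
    · have e5 := P_eq hlam C (k+2)
      have e6 := A_succ lam C (k+1)
      linarith
    · exact hv_con hlam k


end ChenAux

/-- **Chen's lemma for the Poisson Stein equation.** Let `λ > 0` and `C ⊆ ℕ`. The
equation `λ f(k+1) − k f(k) = 1_C(k) − P_λ(C)` admits a unique solution
`f : ℕ → ℝ` with `f(0) = 0`, and this solution satisfies
`|f(k+1) − f(k)| ≤ (1 − e^{−λ})/λ` for every `k`. -/
theorem chen_lemma_poisson_stein (lam : ℝ) (hlam : 0 < lam) (C : Set ℕ) :
    (∃! f : ℕ → ℝ, f 0 = 0 ∧ ∀ k : ℕ,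
      lam * f (k + 1) - (k : ℝ) * f k =
        (if k ∈ C then (1 : ℝ) else 0) - poissonProb lam C) ∧
    (∀ f : ℕ → ℝ, (f 0 = 0 ∧ ∀ k : ℕ,
        lam * f (k + 1) - (k : ℝ) * f k =
          (if k ∈ C then (1 : ℝ) else 0) - poissonProb lam C) →
      ∀ k : ℕ, |f (k + 1) - f k| ≤ (1 - Real.exp (-lam)) / lam) := by
  constructor
  · refine ⟨ChenAux.steinSol lam C,
      ⟨ChenAux.steinSol_zero lam C, ChenAux.steinSol_spec hlam C⟩, ?_⟩
    intro g hg
    exact ChenAux.eq_steinSol hlam C g hg.1 hg.2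
  · intro f hf k
    have hfe : f = ChenAux.steinSol lam C := ChenAux.eq_steinSol hlam C f hf.1 hf.2
    rw [hfe]
    exact ChenAux.abs_delta hlam C k
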